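/- Let A be an n×n real symmetric matrix with a_ij ≥ 0 for all i ≠ j, connected graph G_A, and positive reals m_1,...,m_n with ∑_i m_i a_ij = 0 for all j. Then for any real numbers s_1,...,s_n with ∑_j m_j s_j = 0, there exist reals r_1,...,r_n such that ∑_i r_i a_ij = s_j for all j. (The image of A equals the orthogonal complement of the vector (m_1,...,m_n).) -/

import Mathlib

/-- Auxiliary: the kernel of a symmetric matrix with nonneg off-diagonal entries,
connected graph, and row-sums-against-`m` zero is spanned by `m`. -/
lemma ker_eq_span_aux {n : ℕ} (A : Matrix (Fin n) (Fin n) ℝ)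
    (hsym : A.IsSymm)
    (hconn : (SimpleGraph.fromRel (fun i j => A i j ≠ 0)).Connected)
    (hoff : ∀ i j : Fin n, i ≠ j → 0 ≤ A i j)
    (m : Fin n → ℝ) (hm : ∀ i, 0 < m i)
    (hAm : ∀ i, ∑ j, A i j * m j = 0)
    (x : Fin n → ℝ) (hx : ∀ i, ∑ j, A i j * x j = 0) :
    ∃ c : ℝ, x = c • m := by
  haveI : Nonempty (Fin n) := hconn.nonempty
  set t : Fin n → ℝ := fun i => x i / m i with ht
  obtain ⟨i0, -, hi0⟩ := Finset.exists_mem_eq_sup' (Finset.univ_nonempty) t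
  set c : ℝ := Finset.univ.sup' Finset.univ_nonempty t with hc
  have hle : ∀ j, t j ≤ c := fun j => Finset.le_sup' t (Finset.mem_univ j)
  have hxt : ∀ j, x j = t j * m j := by
    intro j
    rw [ht]
    exact (div_mul_cancel₀ (x j) (hm j).ne').symm
  -- key step: if t i = c and A i j ≠ 0 then t j = c
  have hS : ∀ i, t i = c → ∀ j, A i j ≠ 0 → t j = c := by
    intro i hi j hA
    by_cases hij : j = i
    · rw [hij]; exact hi
    · have hsum : ∑ k, A i k * m k * (t k - c) = 0 := by
        have h1 : ∑ k, A i k * m k * (t k - c)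
            = (∑ k, A i k * x k) - c * (∑ k, A i k * m k) := by
          rw [Finset.mul_sum, ← Finset.sum_sub_distrib]
          refine Finset.sum_congr rfl fun k _ => ?_
          rw [hxt k]; ring
        rw [h1, hx i, hAm i]; ring
      have hnonpos : ∀ k ∈ Finset.univ, A i k * m k * (t k - c) ≤ 0 := by
        intro k _
        by_cases hk : k = i
        · subst hk; rw [hi]; simp
        · have h1 : 0 ≤ A i k := hoff i k (fun h => hk h.symm)
          have h2 : 0 < m k := hm k
          have h3 : t k - c ≤ 0 := by linarith [hle k]
          exact mul_nonpos_of_nonneg_of_nonpos (mul_nonneg h1 h2.le) h3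
      have hzero := (Finset.sum_eq_zero_iff_of_nonpos hnonpos).mp hsum j
        (Finset.mem_univ j)
      have hApos : 0 < A i j * m j :=
        lt_of_le_of_ne (mul_nonneg (hoff i j (fun h => hij h.symm)) (hm j).le)
          (by
            intro h
            exact hA (by
              have := (hm j).ne'
              rcases mul_eq_zero.mp h.symm with h' | h'
              · exact h'
              · exact absurd h' this))
      have : t j - c = 0 := by
        by_contra hne
        exact hne (by
          have := mul_eq_zero.mp hzero
          rcases this with h' | h'
          · exact absurd h' hApos.ne'
          · exact h')
      linarith
  -- propagate along walks
  have key : ∀ a b : Fin n,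
      (SimpleGraph.fromRel fun i j => A i j ≠ 0).Reachable a b → t a = c → t b = c := by
    intro a b hr
    obtain ⟨w⟩ := hr
    induction w with
    | nil => exact id
    | @cons u v w' h p ih =>
      intro hu
      apply ih
      rw [SimpleGraph.fromRel_adj] at h
      rcases h.2 with h' | h'
      · exact hS u hu v h'
      · refine hS u hu v ?_
        rw [hsym.apply u v] at h'
        exact h'
  have hall : ∀ k, t k = c := fun k => key i0 k (hconn.preconnected i0 k) hi0.symm
  refine ⟨c, funext fun i => ?_⟩
  rw [hxt i, hall i]
  simp [mul_comm]

set_option maxHeartbeats 800000 in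
/-- For a real symmetric matrix `A` with connected graph, nonnegative off-diagonal
entries, and a positive vector `m` with `A·m = 0` (i.e. `∑ᵢ mᵢ aᵢⱼ = 0` for all `j`),
the image of `A` is the orthogonal complement of `m`: every `s` with `∑ⱼ mⱼ sⱼ = 0`
can be written as `sⱼ = ∑ᵢ rᵢ aᵢⱼ`. -/
theorem image_eq_m_perp {n : ℕ} (A : Matrix (Fin n) (Fin n) ℝ)
    (hsym : A.IsSymm)
    (hconn : (SimpleGraph.fromRel (fun i j => A i j ≠ 0)).Connected)
    (hoff : ∀ i j : Fin n, i ≠ j → 0 ≤ A i j)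
    (m : Fin n → ℝ) (hm : ∀ i, 0 < m i)
    (heq : ∀ j, ∑ i, m i * A i j = 0) :
    ∀ s : Fin n → ℝ, (∑ j, m j * s j = 0) →
      ∃ r : Fin n → ℝ, ∀ j, ∑ i, r i * A i j = s j := by
  intro s hs
  haveI : Nonempty (Fin n) := hconn.nonempty
  have hAm : ∀ i, ∑ j, A i j * m j = 0 := by
    intro i
    have h := heq i
    rw [← h]
    refine Finset.sum_congr rfl fun j _ => ?_
    rw [hsym.apply i j]; ring
  have hm0 : m ≠ 0 := by
    intro h
    have := hm (Classical.arbitrary (Fin n))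
    rw [h] at this
    exact lt_irrefl 0 this
  -- the linear map x ↦ A *ᵥ x
  set f : (Fin n → ℝ) →ₗ[ℝ] (Fin n → ℝ) := A.mulVecLin with hf
  -- the functional v ↦ ∑ j, m j * v j
  set φ : (Fin n → ℝ) →ₗ[ℝ] ℝ :=
    { toFun := fun v => ∑ j, m j * v j
      map_add' := fun u v => by
        simp [mul_add, Finset.sum_add_distrib]
      map_smul' := fun a v => by
        simp [Finset.mul_sum, mul_left_comm] } with hφ
  have hkerf : LinearMap.ker f = Submodule.span ℝ {m} := by
    apply le_antisymm
    · intro x hx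
      rw [LinearMap.mem_ker] at hx
      have hx' : ∀ i, ∑ j, A i j * x j = 0 := by
        intro i
        have := congrFun hx i
        simpa [hf, Matrix.mulVec, dotProduct] using this
      obtain ⟨c, hcx⟩ := ker_eq_span_aux A hsym hconn hoff m hm hAm x hx'
      rw [Submodule.mem_span_singleton]
      exact ⟨c, hcx.symm⟩
    · rw [Submodule.span_le, Set.singleton_subset_iff]
      rw [SetLike.mem_coe, LinearMap.mem_ker]
      funext i
      simpa [hf, Matrix.mulVec, dotProduct] using hAm i
  have hrankf : Module.finrank ℝ (LinearMap.range f) + 1 = n := by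
    have h := LinearMap.finrank_range_add_finrank_ker f
    rw [hkerf, finrank_span_singleton hm0] at h
    simpa using h
  have hrangeφ : LinearMap.range φ = ⊤ := by
    rw [LinearMap.range_eq_top]
    intro y
    have hφm : φ m = ∑ j, m j * m j := rfl
    have hpos : 0 < φ m := by
      rw [hφm]
      refine Finset.sum_pos (fun j _ => mul_pos (hm j) (hm j)) Finset.univ_nonempty
    refine ⟨(y / φ m) • m, ?_⟩
    rw [map_smul]
    rw [smul_eq_mul, div_mul_cancel₀ y hpos.ne']
  have hkerφ : 1 + Module.finrank ℝ (LinearMap.ker φ) = n := by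
    have h := LinearMap.finrank_range_add_finrank_ker φ
    rw [hrangeφ] at h
    simpa using h
  have hle : LinearMap.range f ≤ LinearMap.ker φ := by
    rintro _ ⟨r, rfl⟩
    rw [LinearMap.mem_ker]
    show ∑ j, m j * (A.mulVec r) j = 0
    have : ∑ j, m j * (A.mulVec r) j = ∑ i, (∑ j, m j * A j i) * r i := by
      simp only [Matrix.mulVec, dotProduct, Finset.mul_sum, Finset.sum_mul]
      rw [Finset.sum_comm]
      refine Finset.sum_congr rfl fun i _ => Finset.sum_congr rfl fun j _ => by ring
    rw [this]
    refine Finset.sum_eq_zero fun i _ => ?_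
    rw [heq i, zero_mul]
  have heqsub : LinearMap.range f = LinearMap.ker φ := by
    refine Submodule.eq_of_le_of_finrank_le hle ?_
    omega
  have hsmem : s ∈ LinearMap.ker φ := by
    rw [LinearMap.mem_ker]
    exact hs
  rw [← heqsub] at hsmem
  obtain ⟨r, hr⟩ := hsmem
  refine ⟨r, fun j => ?_⟩
  have := congrFun hr j
  rw [← this]
  show ∑ i, r i * A i j = (A.mulVec r) j
  simp only [Matrix.mulVec, dotProduct]
  refine Finset.sum_congr rfl fun i _ => ?_
  rw [hsym.apply i j]; ring
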